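/- arXiv:2401.12465 — 2 statements merged into one kernel-verified Lean document; each statement's English description precedes it below -/
import Mathlib

section
/- Pliss Lemma: Let a_1,...,a_k be real numbers with a_i ≤ C for all i, and suppose that a_1 + ... + a_k ≥ k·χ₁. Then for any χ₂ < χ₁ (with χ₂ < C), there exist indices 1 ≤ j_1 < j_2 < ... < j_l ≤ k such that l/k ≥ (χ₁ − χ₂)/(C − χ₂), and for each 1 ≤ n ≤ l and each 1 ≤ m ≤ j_n one has a_m + a_{m+1} + ... + a_{j_n} ≥ (j_n − m + 1)·χ₂. -/
/-- **Pliss Lemma.** Given reals `a 1, ..., a k` bounded above by `C` whose sum is at least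
`k * χ₁`, and any `χ₂ < χ₁` with `χ₂ < C`, there is a nonempty set `J ⊆ {1,...,k}` of
"Pliss times" with density at least `(χ₁ - χ₂)/(C - χ₂)` such that every backward partial
sum ending at a Pliss time `jn` averages at least `χ₂`. -/
theorem pliss_lemma (k : ℕ) (hk : 0 < k) (a : ℕ → ℝ) (C χ₁ χ₂ : ℝ)
    (hC : ∀ i, 1 ≤ i → i ≤ k → a i ≤ C)
    (hsum : (k : ℝ) * χ₁ ≤ ∑ i ∈ Finset.Icc 1 k, a i)
    (h12 : χ₂ < χ₁) (h2C : χ₂ < C) :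
    ∃ J : Finset ℕ, J.Nonempty ∧ J ⊆ Finset.Icc 1 k ∧
      (χ₁ - χ₂) / (C - χ₂) ≤ (J.card : ℝ) / (k : ℝ) ∧
      ∀ jn ∈ J, ∀ m, 1 ≤ m → m ≤ jn →
        ((jn : ℝ) - (m : ℝ) + 1) * χ₂ ≤ ∑ i ∈ Finset.Icc m jn, a i := by
  classical
  set b : ℕ → ℝ := fun i => a i - χ₂ with hb
  set S : ℕ → ℝ := fun n => ∑ i ∈ Finset.Ioc 0 n, b i with hS
  set P : ℕ → Prop := fun j => ∀ t < j, S t ≤ S j with hP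
  have hCχ : (0:ℝ) < C - χ₂ := by linarith
  -- sum over Icc m n of b in terms of S
  have hSicc : ∀ m n : ℕ, 1 ≤ m → m ≤ n →
      ∑ i ∈ Finset.Icc m n, b i = S n - S (m-1) := by
    intro m n hm hmn
    have h1 : Finset.Icc m n = Finset.Ioc (m-1) n := by
      ext x; simp only [Finset.mem_Icc, Finset.mem_Ioc]; omega
    have h2 : S (m-1) + ∑ i ∈ Finset.Ioc (m-1) n, b i = S n := by
      simp only [hS]
      exact Finset.sum_Ioc_consecutive _ (Nat.zero_le _) (by omega)
    rw [h1]; linarith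
  -- step formula
  have hstep : ∀ m : ℕ, S (m+1) = S m + b (m+1) := by
    intro m
    simp only [hS]
    exact Finset.sum_Ioc_succ_top (Nat.zero_le m) _
  -- key counting bound
  have key : ∀ n, n ≤ k → S n ≤ ((Finset.Icc 1 n).filter P).card * (C - χ₂) := by
    intro n
    induction n using Nat.strong_induction_on with
    | _ n ih =>
      intro hnk
      rcases Nat.eq_zero_or_pos n with rfl | hn
      · simp [hS]
      obtain ⟨m, rfl⟩ : ∃ m, n = m + 1 := ⟨n - 1, by omega⟩
      by_cases hPn : P (m+1)
      · have hba : b (m+1) ≤ C - χ₂ := by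
          have := hC (m+1) (by omega) hnk
          simp only [hb]; linarith
        have hSm := ih m (by omega) (by omega)
        have hins : Finset.Icc 1 (m+1) = insert (m+1) (Finset.Icc 1 m) := by
          ext x; simp only [Finset.mem_Icc, Finset.mem_insert]; omega
        have hcard : ((Finset.Icc 1 (m+1)).filter P).card
            = ((Finset.Icc 1 m).filter P).card + 1 := by
          rw [hins, Finset.filter_insert, if_pos hPn,
            Finset.card_insert_of_notMem (by
              intro h
              have := Finset.mem_of_mem_filter _ h
              simp at this)]
        rw [hstep, hcard]
        push_cast
        linarith
      · simp only [hP] at hPn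
        push_neg at hPn
        obtain ⟨t, htn, hst⟩ := hPn
        have hSt := ih t htn (by omega)
        have hcard : ((Finset.Icc 1 t).filter P).card
            ≤ ((Finset.Icc 1 (m+1)).filter P).card :=
          Finset.card_le_card (Finset.filter_subset_filter _
            (Finset.Icc_subset_Icc_right (by omega)))
        have : ((Finset.Icc 1 t).filter P).card * (C - χ₂)
            ≤ ((Finset.Icc 1 (m+1)).filter P).card * (C - χ₂) := by
          apply mul_le_mul_of_nonneg_right _ hCχ.le
          exact_mod_cast hcard
        linarith
  -- lower bound on S k
  have hSk : (k:ℝ) * (χ₁ - χ₂) ≤ S k := by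
    have h1 : S k = (∑ i ∈ Finset.Icc 1 k, a i) - k * χ₂ := by
      have : Finset.Ioc 0 k = Finset.Icc 1 k := by
        rw [← Finset.Icc_add_one_left_eq_Ioc]; rfl
      simp only [hS, this, hb, Finset.sum_sub_distrib, Finset.sum_const,
        Nat.card_Icc, smul_eq_mul]
      push_cast
      ring_nf
    rw [h1]
    nlinarith
  set J := (Finset.Icc 1 k).filter P with hJ
  have hkey := key k le_rfl
  have hkpos : (0:ℝ) < k := by exact_mod_cast hk
  have hJcard : (k:ℝ) * (χ₁ - χ₂) ≤ J.card * (C - χ₂) := by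
    rw [hJ]; linarith
  refine ⟨J, ?_, Finset.filter_subset _ _, ?_, ?_⟩
  · rcases J.eq_empty_or_nonempty with h | h
    · exfalso
      rw [h] at hJcard
      simp at hJcard
      nlinarith
    · exact h
  · rw [div_le_div_iff₀ hCχ hkpos]
    nlinarith
  · intro jn hjn m hm hmjn
    have hjnP : P jn := (Finset.mem_filter.mp hjn).2
    have h0 : S (m-1) ≤ S jn := hjnP (m-1) (by omega)
    have h1 : ∑ i ∈ Finset.Icc m jn, b i = S jn - S (m-1) := hSicc m jn hm hmjn
    have h2 : ∑ i ∈ Finset.Icc m jn, b i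
        = (∑ i ∈ Finset.Icc m jn, a i) - ((jn:ℝ) - m + 1) * χ₂ := by
      simp only [hb, Finset.sum_sub_distrib, Finset.sum_const, Nat.card_Icc, nsmul_eq_mul]
      have : ((jn + 1 - m : ℕ) : ℝ) = (jn:ℝ) - m + 1 := by
        have : m ≤ jn + 1 := by omega
        push_cast [this]
        ring
      rw [this]
    linarith
end

section
/- Entropy of measures supported on the vanishing-exponent set: if ν is an f-invariant ergodic Borel probability measure with ν(R) = 1 for some f-invariant set R, then h_ν(f) ≤ h_top(f, R), where h_top(f,·) is Bowen's dimension-like topological entropy and h_ν(f) is the Katok metric entropy defined via minimal cardinalities of Bowen-ball covers of sets of measure at least δ. -/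
open Filter Set

/-- The `(n,ε)`-Bowen ball of `f` centered at `x`. -/
def bowenBall {X : Type*} [MetricSpace X] (f : X → X) (n : ℕ) (ε : ℝ) (x : X) : Set X :=
  {y | ∀ i < n, dist (f^[i] x) (f^[i] y) < ε}

/-- The quantity `m_{ε,h}(Y)`: limit as `n → ∞` (equivalently, supremum over `n`, by
monotonicity) of the infimum of `Σ_i e^{-h n_i}` over countable covers of `Y` by Bowen balls
`B_{n_i}(x_i, ε)` with `n_i ≥ n`. -/
noncomputable def mBowen {X : Type*} [MetricSpace X] (f : X → X) (ε h : ℝ) (Y : Set X) :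
    ENNReal :=
  ⨆ N : ℕ, sInf {s : ENNReal | ∃ (c : ℕ → X) (m : ℕ → ℕ),
    (∀ i, N ≤ m i) ∧ Y ⊆ ⋃ i, bowenBall f (m i) ε (c i) ∧
    s = ∑' i, ENNReal.ofReal (Real.exp (-h * (m i : ℝ)))}

/-- `h_top(f, Y, ε) = inf {h : m_{ε,h}(Y) = 0}`. -/
noncomputable def bowenEntropyAt {X : Type*} [MetricSpace X] (f : X → X) (ε : ℝ) (Y : Set X) :
    EReal :=
  sInf ((fun h : ℝ => (h : EReal)) '' {h : ℝ | mBowen f ε h Y = 0})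

/-- Bowen's dimension-like topological entropy of `f` on the (possibly non-compact) set `Y`:
the limit as `ε → 0` (equivalently, supremum over `ε > 0`, by monotonicity) of
`h_top(f, Y, ε)`. -/
noncomputable def bowenEntropy {X : Type*} [MetricSpace X] (f : X → X) (Y : Set X) : EReal :=
  ⨆ (ε : ℝ) (_ : 0 < ε), bowenEntropyAt f ε Y


open MeasureTheory

/-- `s(n, ε, δ)`: the minimal number of `(n,ε)`-Bowen balls whose union has `ν`-measure at
least `δ`. -/
noncomputable def spanCount {X : Type*} [MetricSpace X] [MeasurableSpace X] (f : X → X) (ν : Measure X)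
    (n : ℕ) (ε δ : ℝ) : ℕ :=
  sInf {m : ℕ | ∃ c : Fin m → X, ENNReal.ofReal δ ≤ ν (⋃ i, bowenBall f n ε (c i))}

/-- Katok's metric entropy of the ergodic measure `ν` (with parameter `δ ∈ (0,1)`):
`lim_{ε→0} limsup_n (1/n) log s(n,ε,δ)` (the limit as `ε → 0` being a supremum over `ε > 0`,
by monotonicity). -/
noncomputable def katokEntropy {X : Type*} [MetricSpace X] [MeasurableSpace X] (f : X → X) (ν : Measure X)
    (δ : ℝ) : EReal :=
  ⨆ (ε : ℝ) (_ : 0 < ε),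
    limsup (fun n : ℕ => (((n : ℝ)⁻¹ * Real.log (spanCount f ν n ε δ) : ℝ) : EReal)) atTop

namespace BowenAux

open MeasureTheory
open scoped ENNReal

variable {X : Type*} [MetricSpace X] {A : Type*}

/-- iteration times of the itinerary construction -/
def itTime (f : X → X) (len : A → ℕ) (sel : X → A) (x : X) : ℕ → ℕ
  | 0 => 0
  | j + 1 => itTime f len sel x j + len (sel (f^[itTime f len sel x j] x))

variable (f : X → X) {len : A → ℕ} (sel : X → A)

lemma itTime_succ (x : X) (j : ℕ) :
    itTime f len sel x (j + 1)
      = itTime f len sel x j + len (sel (f^[itTime f len sel x j] x)) := rfl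

variable (hlen : ∀ a, 1 ≤ len a)
include hlen

lemma itTime_strictMono (x : X) : StrictMono (itTime f len sel x) := by
  apply strictMono_nat_of_lt_succ
  intro j
  have := hlen (sel (f^[itTime f len sel x j] x))
  rw [itTime_succ]
  omega

lemma le_itTime (x : X) (j : ℕ) : j ≤ itTime f len sel x j := by
  induction j with
  | zero => exact le_rfl
  | succ i ih =>
    have := hlen (sel (f^[itTime f len sel x i] x))
    rw [itTime_succ]
    omega

omit hlen

lemma itTime_eq_sum (x : X) (k : ℕ) :
    itTime f len sel x k = ∑ j ∈ Finset.range k, len (sel (f^[itTime f len sel x j] x)) := by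
  induction k with
  | zero => rfl
  | succ i ih => rw [Finset.sum_range_succ, itTime_succ, ih]

lemma exists_block (x : X) : ∀ (k : ℕ) (s : ℕ), s < itTime f len sel x k →
    ∃ j < k, itTime f len sel x j ≤ s ∧ s < itTime f len sel x (j + 1) := by
  intro k
  induction k with
  | zero => intro s hs; simp [itTime] at hs
  | succ i ih =>
    intro s hs
    by_cases h : s < itTime f len sel x i
    · obtain ⟨j, hj, h1, h2⟩ := ih s h
      exact ⟨j, by omega, h1, h2⟩
    · exact ⟨i, by omega, by omega, hs⟩

lemma itTime_congr {x y : X} {k : ℕ}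
    (hc : ∀ j < k, sel (f^[itTime f len sel x j] x) = sel (f^[itTime f len sel y j] y)) :
    ∀ j, j ≤ k → itTime f len sel x j = itTime f len sel y j := by
  intro j
  induction j with
  | zero => intro _; rfl
  | succ i ih =>
    intro hik
    rw [itTime_succ, itTime_succ, hc i (by omega), ih (by omega)]

lemma dist_lt_of_code_eq {ρ : ℝ} (center : A → X)
    (hsel : ∀ z, z ∈ bowenBall f (len (sel z)) ρ (center (sel z)))
    {x y : X} {k n : ℕ} (hn : n ≤ itTime f len sel x k)
    (hc : ∀ j < k, sel (f^[itTime f len sel x j] x) = sel (f^[itTime f len sel y j] y))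
    {s : ℕ} (hs : s < n) : dist (f^[s] x) (f^[s] y) < 2 * ρ := by
  obtain ⟨j, hjk, h1, h2⟩ := exists_block f sel x k s (lt_of_lt_of_le hs hn)
  have hty : itTime f len sel y j = itTime f len sel x j :=
    (itTime_congr f sel hc j hjk.le).symm
  have hay : sel (f^[itTime f len sel x j] y) = sel (f^[itTime f len sel x j] x) := by
    conv_lhs => rw [← hty]
    exact (hc j hjk).symm
  have hxmem : f^[itTime f len sel x j] x
      ∈ bowenBall f (len (sel (f^[itTime f len sel x j] x))) ρ
        (center (sel (f^[itTime f len sel x j] x))) := hsel _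
  have hymem : f^[itTime f len sel x j] y
      ∈ bowenBall f (len (sel (f^[itTime f len sel x j] x))) ρ
        (center (sel (f^[itTime f len sel x j] x))) := by
    have := hsel (f^[itTime f len sel y j] y)
    rw [hty, hay] at this
    exact this
  rw [itTime_succ] at h2
  have hi : s - itTime f len sel x j < len (sel (f^[itTime f len sel x j] x)) := by omega
  have hx' := hxmem _ hi
  have hy' := hymem _ hi
  have hit : ∀ z : X, f^[s - itTime f len sel x j] (f^[itTime f len sel x j] z) = f^[s] z := by
    intro z
    rw [← Function.iterate_add_apply]
    congr 1
    omega
  rw [hit x] at hx'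
  rw [hit y] at hy'
  calc dist (f^[s] x) (f^[s] y)
      ≤ dist (f^[s] x) (f^[s - itTime f len sel x j] (center (sel (f^[itTime f len sel x j] x))))
        + dist (f^[s - itTime f len sel x j] (center (sel (f^[itTime f len sel x j] x))))
          (f^[s] y) := dist_triangle _ _ _
    _ < ρ + ρ := by
        rw [dist_comm (f^[s] x)]
        exact add_lt_add hx' hy'
    _ = 2 * ρ := by ring


open Finset in
theorem code_cover [Nonempty X] [Fintype A] (f : X → X)
    (len : A → ℕ) (sel : X → A) (center : A → X)
    (hlen : ∀ a, 1 ≤ len a) {ρ : ℝ}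
    (hsel : ∀ z, z ∈ bowenBall f (len (sel z)) ρ (center (sel z)))
    (isD : A → Bool) (D : Set X) [DecidablePred (· ∈ D)]
    (hselD : ∀ z, isD (sel z) = true → z ∈ D)
    {h : ℝ} (hh : 0 ≤ h) (u : A → ℝ) (hu : ∀ a, 0 < u a) (hu1 : ∑ a, u a ≤ 1)
    {wD : ℝ} (hwD : 0 < wD) (hwD1 : wD ≤ 1) (huD : ∀ a, isD a = true → wD ≤ u a)
    (huL : ∀ a, isD a ≠ true → Real.exp (-h * (len a : ℝ)) ≤ u a)
    (n d L' : ℕ) (hn : 1 ≤ n) (hL' : ∀ a, len a ≤ L') :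
    ∃ (M : ℕ) (Y : Fin M → X),
      ((M : ℝ) ≤ ((n : ℝ) + 1) * (wD⁻¹ ^ d * Real.exp (h * ((n : ℝ) + (L' : ℝ))))) ∧
      ∀ x : X, (((Finset.range n).filter fun t => f^[t] x ∈ D).card ≤ d) →
        ∃ i, x ∈ bowenBall f n (2 * ρ) (Y i) := by
  classical
  have exk : ∀ x : X, ∃ k, n ≤ itTime f len sel x k :=
    fun x => ⟨n, le_itTime f sel hlen x n⟩
  let kf : X → ℕ := fun x => Nat.find (exk x)
  have hkf_le : ∀ x, kf x ≤ n := fun x => Nat.find_le (le_itTime f sel hlen x n)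
  have hkf_spec : ∀ x, n ≤ itTime f len sel x (kf x) := fun x => Nat.find_spec (exk x)
  have hkf_min : ∀ x, ∀ j, j < kf x → itTime f len sel x j < n :=
    fun x j hj => lt_of_not_ge (Nat.find_min (exk x) hj)
  have hkf_pos : ∀ x, 1 ≤ kf x := by
    intro x
    rcases Nat.eq_zero_or_pos (kf x) with h0 | h1
    · exfalso
      have h2 := hkf_spec x
      rw [h0] at h2
      simp only [itTime] at h2
      omega
    · exact h1
  let Γ := Σ k : Fin (n + 1), (Fin (k : ℕ) → A)
  let code : X → Γ := fun x =>
    ⟨⟨kf x, Nat.lt_succ_of_le (hkf_le x)⟩, fun j => sel (f^[itTime f len sel x (j : ℕ)] x)⟩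
  have code_eq : ∀ {x y : X}, code x = code y →
      kf x = kf y ∧ ∀ j, j < kf x →
        sel (f^[itTime f len sel x j] x) = sel (f^[itTime f len sel y j] y) := by
    intro x y hxy
    obtain ⟨h1, h2⟩ := Sigma.ext_iff.mp hxy
    have hk : kf x = kf y := by simpa using congrArg Fin.val h1
    refine ⟨hk, fun j hj => ?_⟩
    have h3 := (Fin.heq_fun_iff (show kf x = kf y from hk)).mp h2 ⟨j, hj⟩
    simpa using h3
  let Q : Γ → Prop := fun v =>
    ((Finset.univ.filter fun j => isD (v.2 j) = true).card ≤ d) ∧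
      ((∑ j, len (v.2 j)) ≤ n + L')
  let V : Finset Γ := Finset.univ.filter Q
  let Y0 : Γ → X := fun v =>
    if hv : ∃ x : X, code x = v then hv.choose else Classical.arbitrary X
  refine ⟨V.card, fun i => Y0 ((V.equivFin.symm i) : Γ), ?_, ?_⟩
  · -- cardinality bound
    have key : (V.card : ℝ) * (wD ^ d * Real.exp (-(h * ((n : ℝ) + (L' : ℝ))))) ≤ (n : ℝ) + 1 := by
      have hmin : ∀ v ∈ V, wD ^ d * Real.exp (-(h * ((n : ℝ) + (L' : ℝ))))
          ≤ ∏ j, u (v.2 j) := by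
        intro v hv
        obtain ⟨hQ1, hQ2⟩ : Q v := (Finset.mem_filter.mp hv).2
        rw [← Finset.prod_filter_mul_prod_filter_not Finset.univ
          (fun j => isD (v.2 j) = true) (fun j => u (v.2 j))]
        have part1 : wD ^ d ≤ ∏ j ∈ Finset.univ.filter fun j => isD (v.2 j) = true, u (v.2 j) := by
          calc wD ^ d ≤ wD ^ (Finset.univ.filter fun j => isD (v.2 j) = true).card :=
                pow_le_pow_of_le_one hwD.le hwD1 hQ1
            _ = ∏ j ∈ Finset.univ.filter fun j => isD (v.2 j) = true, wD :=
                (Finset.prod_const wD).symm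
            _ ≤ _ := Finset.prod_le_prod (fun _ _ => hwD.le)
                (fun j hj => huD _ (Finset.mem_filter.mp hj).2)
        have part2 : Real.exp (-(h * ((n : ℝ) + (L' : ℝ))))
            ≤ ∏ j ∈ Finset.univ.filter fun j => ¬ isD (v.2 j) = true, u (v.2 j) := by
          have step1 : ∀ j ∈ Finset.univ.filter fun j => ¬ isD (v.2 j) = true,
              Real.exp (-h * (len (v.2 j) : ℝ)) ≤ u (v.2 j) :=
            fun j hj => huL _ (Finset.mem_filter.mp hj).2
          calc Real.exp (-(h * ((n : ℝ) + (L' : ℝ))))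
              ≤ Real.exp (-h * ∑ j ∈ Finset.univ.filter fun j => ¬ isD (v.2 j) = true,
                  (len (v.2 j) : ℝ)) := by
                apply Real.exp_le_exp.mpr
                have hsum : (∑ j ∈ Finset.univ.filter fun j => ¬ isD (v.2 j) = true,
                    (len (v.2 j) : ℝ)) ≤ (n : ℝ) + (L' : ℝ) := by
                  have h4 : (∑ j ∈ Finset.univ.filter fun j => ¬ isD (v.2 j) = true,
                      len (v.2 j)) ≤ n + L' :=
                    le_trans (Finset.sum_le_sum_of_subset (Finset.filter_subset _ _)) hQ2
                  calc (∑ j ∈ Finset.univ.filter fun j => ¬ isD (v.2 j) = true,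
                      (len (v.2 j) : ℝ))
                      = ((∑ j ∈ Finset.univ.filter fun j => ¬ isD (v.2 j) = true,
                        len (v.2 j) : ℕ) : ℝ) := by push_cast; rfl
                    _ ≤ (((n + L' : ℕ)) : ℝ) := by exact_mod_cast h4
                    _ = (n : ℝ) + (L' : ℝ) := by push_cast; rfl
                nlinarith [hsum, hh]
            _ = ∏ j ∈ Finset.univ.filter fun j => ¬ isD (v.2 j) = true,
                Real.exp (-h * (len (v.2 j) : ℝ)) := by
                rw [← Real.exp_sum, Finset.mul_sum]
            _ ≤ _ := Finset.prod_le_prod (fun _ _ => (Real.exp_pos _).le) step1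
        have := mul_le_mul part1 part2 (Real.exp_pos _).le
          (le_trans (by positivity) part1)
        exact this
      have hcard : (V.card : ℝ) * (wD ^ d * Real.exp (-(h * ((n : ℝ) + (L' : ℝ)))))
          ≤ ∑ v ∈ V, ∏ j, u (v.2 j) := by
        have := Finset.card_nsmul_le_sum V (fun v => ∏ j, u (v.2 j)) _ hmin
        rwa [nsmul_eq_mul] at this
      have hall : (∑ v ∈ V, ∏ j, u (v.2 j)) ≤ ∑ v : Γ, ∏ j, u (v.2 j) :=
        Finset.sum_le_sum_of_subset_of_nonneg (Finset.subset_univ V)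
          (fun v _ _ => Finset.prod_nonneg fun j _ => (hu _).le)
      have hSig : (∑ v : Γ, ∏ j, u (v.2 j)) ≤ (n : ℝ) + 1 := by
        have inner : ∀ κ : ℕ, (∑ g : Fin κ → A, ∏ j, u (g j)) = (∑ a, u a) ^ κ := by
          intro κ
          rw [show ((∑ a, u a) ^ κ) = ∏ _j : Fin κ, ∑ a, u a by
            rw [Finset.prod_const, Finset.card_univ, Fintype.card_fin]]
          rw [Finset.prod_univ_sum]
          rw [Fintype.piFinset_univ]
        calc (∑ v : Γ, ∏ j, u (v.2 j))
            = ∑ k : Fin (n + 1), ∑ g : Fin (k : ℕ) → A, ∏ j, u (g j) := by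
              rw [← Finset.univ_sigma_univ, Finset.sum_sigma]
          _ ≤ ∑ _k : Fin (n + 1), (1 : ℝ) := by
              apply Finset.sum_le_sum
              intro k _
              rw [inner]
              exact pow_le_one₀ (Finset.sum_nonneg fun a _ => (hu a).le) hu1
          _ = (n : ℝ) + 1 := by simp
      linarith
    have hpos : 0 < wD ^ d * Real.exp (-(h * ((n : ℝ) + (L' : ℝ)))) := by positivity
    rw [show ((n : ℝ) + 1) * (wD⁻¹ ^ d * Real.exp (h * ((n : ℝ) + (L' : ℝ))))
        = ((n : ℝ) + 1) / (wD ^ d * Real.exp (-(h * ((n : ℝ) + (L' : ℝ))))) by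
      rw [Real.exp_neg]
      field_simp
      rw [← mul_pow, one_div, inv_mul_cancel₀ hwD.ne', one_pow]]
    rw [le_div_iff₀ hpos]
    exact key
  · -- covering
    intro x hx
    have hQx : Q (code x) := by
      constructor
      · -- few D-blocks
        apply le_trans _ hx
        apply Finset.card_le_card_of_injOn
          (fun j : Fin ((code x).1 : ℕ) => itTime f len sel x (j : ℕ))
        · intro j hj
          simp only [Finset.coe_filter, Finset.mem_filter, Finset.mem_univ, true_and, Set.mem_setOf_eq] at hj ⊢
          rw [Finset.mem_range]
          refine ⟨hkf_min x _ j.2, hselD _ hj⟩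
        · intro j1 _ j2 _ he
          have := (itTime_strictMono f sel hlen x).injective he
          exact Fin.ext this
      · -- total length
        have hfin : (∑ j : Fin (kf x), len (sel (f^[itTime f len sel x (j : ℕ)] x)))
            = itTime f len sel x (kf x) := by
          rw [itTime_eq_sum]
          exact Fin.sum_univ_eq_sum_range (fun j => len (sel (f^[itTime f len sel x j] x))) (kf x)
        obtain ⟨q, hq⟩ : ∃ q, kf x = q + 1 := ⟨kf x - 1, by have := hkf_pos x; omega⟩
        have h5 : itTime f len sel x q < n := hkf_min x q (by omega)
        have h6 : len (sel (f^[itTime f len sel x q] x)) ≤ L' := hL' _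
        calc (∑ j, len ((code x).2 j)) = itTime f len sel x (kf x) := hfin
          _ ≤ n + L' := by rw [hq, itTime_succ]; omega
    have hvV : code x ∈ V := Finset.mem_filter.mpr ⟨Finset.mem_univ _, hQx⟩
    refine ⟨V.equivFin ⟨code x, hvV⟩, ?_⟩
    have hconv : ((V.equivFin.symm (V.equivFin ⟨code x, hvV⟩)) : Γ) = code x := by
      rw [Equiv.symm_apply_apply]
    show x ∈ bowenBall f n (2 * ρ) (Y0 ((V.equivFin.symm (V.equivFin ⟨code x, hvV⟩)) : Γ))
    rw [hconv]
    have hex : ∃ z : X, code z = code x := ⟨x, rfl⟩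
    have hY0 : Y0 (code x) = hex.choose := dif_pos hex
    have hspec : code hex.choose = code x := hex.choose_spec
    obtain ⟨hk, hsym⟩ := code_eq hspec
    rw [hY0]
    intro s hs
    exact dist_lt_of_code_eq f sel center hsel (hkf_spec hex.choose) hsym hs



lemma good_measure {X : Type*} [MetricSpace X] [MeasurableSpace X] [BorelSpace X]
    (f : X → X) (hf : Continuous f) (ν : Measure X) [IsProbabilityMeasure ν]
    (hmp : MeasurePreserving f ν ν) (D : Set X) (hD : MeasurableSet D)
    [DecidablePred (· ∈ D)]
    {β : ℝ} (hβ : 0 < β) (hνD : ν D ≤ ENNReal.ofReal β) {δ : ℝ}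
    (hδ0 : 0 < δ) (hδ1 : δ < 1)
    {K : ℕ} (hK : 2 / (1 - δ) ≤ (K : ℝ)) {n : ℕ} (hn : 1 ≤ n) {d : ℕ}
    (hd : (K : ℝ) * β * (n : ℝ) ≤ (d : ℝ)) :
    ENNReal.ofReal δ ≤ ν {x | ((Finset.range n).filter fun t => f^[t] x ∈ D).card ≤ d} := by
  set G : Set X := {x | ((Finset.range n).filter fun t => f^[t] x ∈ D).card ≤ d} with hG
  set g : X → ℝ≥0∞ := fun x => ∑ t ∈ Finset.range n, (f^[t] ⁻¹' D).indicator (fun _ => 1) x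
    with hgdef
  have hgm : Measurable g :=
    Finset.measurable_sum _ fun t _ =>
      measurable_const.indicator ((hf.iterate t).measurable hD)
  have hgx : ∀ x, g x = (((Finset.range n).filter fun t => f^[t] x ∈ D).card : ℝ≥0∞) := by
    intro x
    rw [Finset.card_filter]
    push_cast
    refine Finset.sum_congr rfl fun t _ => ?_
    by_cases hxt : f^[t] x ∈ D <;>
      simp [Set.indicator_apply, Set.mem_preimage, hxt]
  have hint : (∫⁻ x, g x ∂ν) = (n : ℝ≥0∞) * ν D := by
    rw [hgdef, lintegral_finset_sum _
      (fun t _ => measurable_const.indicator ((hf.iterate t).measurable hD))]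
    have : ∀ t ∈ Finset.range n,
        (∫⁻ x, (f^[t] ⁻¹' D).indicator (fun _ => (1 : ℝ≥0∞)) x ∂ν) = ν D := by
      intro t _
      rw [lintegral_indicator ((hf.iterate t).measurable hD)]
      simp [(hmp.iterate t).measure_preimage hD.nullMeasurableSet]
    rw [Finset.sum_congr rfl this, Finset.sum_const, Finset.card_range, nsmul_eq_mul]
  have hcompl : Gᶜ = {x | ((d : ℝ≥0∞) + 1) ≤ g x} := by
    ext x
    simp only [Set.mem_compl_iff, hG, Set.mem_setOf_eq, not_le, hgx x]
    rw [show ((d : ℝ≥0∞) + 1) = ((d + 1 : ℕ) : ℝ≥0∞) by push_cast; ring]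
    rw [Nat.cast_le]
    omega
  have hGm : MeasurableSet G := by
    have : G = g ⁻¹' (Set.Iic (d : ℝ≥0∞)) := by
      ext x
      simp only [hG, Set.mem_setOf_eq, Set.mem_preimage, Set.mem_Iic, hgx x, Nat.cast_le]
    rw [this]
    exact hgm measurableSet_Iic
  have hbad : ν Gᶜ ≤ ENNReal.ofReal ((1 - δ) / 2) := by
    rw [hcompl]
    have hm := meas_ge_le_lintegral_div (μ := ν) hgm.aemeasurable
      (show ((d : ℝ≥0∞) + 1) ≠ 0 by simp) (show ((d : ℝ≥0∞) + 1) ≠ ⊤ by simp)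
    refine le_trans hm ?_
    rw [hint]
    apply ENNReal.div_le_of_le_mul
    calc (n : ℝ≥0∞) * ν D ≤ (n : ℝ≥0∞) * ENNReal.ofReal β := by gcongr
      _ = ENNReal.ofReal ((n : ℝ) * β) := by
          rw [ENNReal.ofReal_mul (by positivity)]
          congr 1
          exact (ENNReal.ofReal_natCast n).symm
      _ ≤ ENNReal.ofReal ((1 - δ) / 2 * ((d : ℝ) + 1)) := by
          apply ENNReal.ofReal_le_ofReal
          have h1 : (K : ℝ) * β * (n : ℝ) ≤ (d : ℝ) + 1 := by linarith
          have h2 : (2 / (1 - δ)) * β * (n : ℝ) ≤ (K : ℝ) * β * (n : ℝ) := by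
            have hβn : 0 ≤ β * (n : ℝ) := by positivity
            nlinarith
          have h3 : (2 / (1 - δ)) * β * (n : ℝ) = 2 * (β * n) / (1 - δ) := by ring
          have h4 : (n : ℝ) * β ≤ (1 - δ) / 2 * ((2 / (1 - δ)) * β * (n : ℝ)) := by
            rw [h3]
            rw [show (1 - δ) / 2 * (2 * (β * ↑n) / (1 - δ)) = β * n by
              have hne : (1 : ℝ) - δ ≠ 0 := by linarith
              field_simp]
            linarith
          calc (n : ℝ) * β ≤ (1 - δ) / 2 * ((2 / (1 - δ)) * β * (n : ℝ)) := h4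
            _ ≤ (1 - δ) / 2 * ((d : ℝ) + 1) := by
                apply mul_le_mul_of_nonneg_left (le_trans h2 h1) (by linarith)
      _ = ENNReal.ofReal ((1 - δ) / 2) * ENNReal.ofReal ((d : ℝ) + 1) := by
          rw [ENNReal.ofReal_mul (by linarith)]
      _ = ENNReal.ofReal ((1 - δ) / 2) * ((d : ℝ≥0∞) + 1) := by
          congr 1
          rw [show ((d : ℝ) + 1) = ((d + 1 : ℕ) : ℝ) by push_cast; ring,
            ENNReal.ofReal_natCast]
          push_cast
          ring
  have hsum : (1 : ℝ≥0∞) ≤ ν G + ν Gᶜ := by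
    have := measure_union_le (μ := ν) G Gᶜ
    rw [Set.union_compl_self, measure_univ] at this
    exact this
  have hlow : 1 - ENNReal.ofReal ((1 - δ) / 2) ≤ ν G := by
    rw [tsub_le_iff_right]
    exact le_trans hsum (by gcongr)
  refine le_trans ?_ hlow
  rw [show (1 : ℝ≥0∞) = ENNReal.ofReal 1 by simp]
  rw [← ENNReal.ofReal_sub _ (by linarith)]
  apply ENNReal.ofReal_le_ofReal
  linarith



lemma isOpen_bowenBall {X : Type*} [MetricSpace X] {f : X → X} (hf : Continuous f)
    {n : ℕ} {ε : ℝ} {x : X} : IsOpen (bowenBall f n ε x) := by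
  have heq : bowenBall f n ε x
      = ⋂ i ∈ Finset.range n, (f^[i]) ⁻¹' (Metric.ball (f^[i] x) ε) := by
    ext y
    simp [bowenBall, Metric.mem_ball, dist_comm, Finset.mem_range]
  rw [heq]
  exact isOpen_biInter_finset fun i _ =>
    (Metric.isOpen_ball).preimage (hf.iterate i)


end BowenAux

set_option maxHeartbeats 2000000 in
/-- **Entropy of measures supported on an invariant set**: if `ν` is an `f`-invariant ergodic
Borel probability measure with `ν R = 1` for an `f`-invariant set `R`, then
`h_ν(f) ≤ h_top(f, R)`, where `h_top` is Bowen's dimension-like topological entropy and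
`h_ν(f)` is Katok's metric entropy (with any parameter `δ ∈ (0,1)`). -/
theorem katokEntropy_le_bowenEntropy_of_full_measure {X : Type*} [MetricSpace X]
    [CompactSpace X] [MeasurableSpace X] [BorelSpace X] (f : X ≃ₜ X)
    (ν : Measure X) [IsProbabilityMeasure ν] (herg : Ergodic (⇑f) ν)
    (R : Set X) (hR : MeasurableSet R) (hinv : ⇑f '' R = R) (hfull : ν R = 1)
    (δ : ℝ) (hδ : δ ∈ Set.Ioo (0 : ℝ) 1) :
    katokEntropy (⇑f) ν δ ≤ bowenEntropy (⇑f) R := by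
  classical
  obtain ⟨hδ0, hδ1⟩ := hδ
  have hX : Nonempty X := by
    by_contra hne
    rw [not_nonempty_iff] at hne
    have h0 : ν Set.univ = 1 := measure_univ
    rw [Set.univ_eq_empty_iff.mpr hne, measure_empty] at h0
    exact zero_ne_one h0
  have hf : Continuous (⇑f) := f.continuous
  unfold katokEntropy
  refine iSup₂_le fun ε hε => ?_
  have hρ : 0 < ε / 2 := by linarith
  unfold bowenEntropy
  refine le_trans ?_
    (le_iSup₂ (f := fun e (_ : (0:ℝ) < e) => bowenEntropyAt (⇑f) e R) (ε/2) hρ)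
  unfold bowenEntropyAt
  refine le_sInf fun b hb => ?_
  obtain ⟨h, hmB, rfl⟩ := hb
  simp only [Set.mem_setOf_eq] at hmB
  unfold mBowen at hmB
  have h1 : sInf {s : ENNReal | ∃ (c : ℕ → X) (m : ℕ → ℕ),
      (∀ i, 1 ≤ m i) ∧ R ⊆ ⋃ i, bowenBall (⇑f) (m i) (ε/2) (c i) ∧
      s = ∑' i, ENNReal.ofReal (Real.exp (-h * (m i : ℝ)))} = 0 :=
    le_antisymm (le_trans (le_iSup (fun N : ℕ => sInf {s : ENNReal | ∃ (c : ℕ → X) (m : ℕ → ℕ),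
      (∀ i, N ≤ m i) ∧ R ⊆ ⋃ i, bowenBall (⇑f) (m i) (ε/2) (c i) ∧
      s = ∑' i, ENNReal.ofReal (Real.exp (-h * (m i : ℝ)))}) 1) hmB.le) zero_le
  have h2 : ∃ s ∈ {s : ENNReal | ∃ (c : ℕ → X) (m : ℕ → ℕ),
      (∀ i, 1 ≤ m i) ∧ R ⊆ ⋃ i, bowenBall (⇑f) (m i) (ε/2) (c i) ∧
      s = ∑' i, ENNReal.ofReal (Real.exp (-h * (m i : ℝ)))}, s < 1/2 := by
    apply sInf_lt_iff.mp
    rw [h1]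
    norm_num
  obtain ⟨s, hsmem, hslt⟩ := h2
  obtain ⟨c, m, hm1, hcov, rfl⟩ := hsmem
  have hh : 0 < h := by
    by_contra hle
    push_neg at hle
    have hterm : ∀ i : ℕ, (1 : ENNReal) ≤ ENNReal.ofReal (Real.exp (-h * (m i : ℝ))) := by
      intro i
      rw [← ENNReal.ofReal_one]
      apply ENNReal.ofReal_le_ofReal
      apply Real.one_le_exp
      have : (0:ℝ) ≤ -h := by linarith
      positivity
    have htop : (⊤ : ENNReal) ≤ ∑' i, ENNReal.ofReal (Real.exp (-h * (m i : ℝ))) := by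
      rw [← ENNReal.tsum_const_eq_top_of_ne_zero (α := ℕ) (c := (1:ENNReal)) one_ne_zero]
      exact ENNReal.tsum_le_tsum hterm
    rw [top_le_iff] at htop
    rw [htop] at hslt
    exact absurd hslt (by simp)
  have hpart : ∀ t : Finset ℕ, (∑ i ∈ t, Real.exp (-h * (m i : ℝ))) ≤ 1/2 := by
    intro t
    have h3 := le_trans (ENNReal.sum_le_tsum t) hslt.le
    rw [← ENNReal.ofReal_sum_of_nonneg (fun i _ => (Real.exp_pos _).le)] at h3
    have h4 : ENNReal.ofReal (∑ i ∈ t, Real.exp (-h * (m i : ℝ))) ≤ ENNReal.ofReal (1/2) := by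
      refine le_trans h3 (le_of_eq ?_)
      rw [ENNReal.ofReal_div_of_pos (by norm_num : (0:ℝ) < 2)]
      norm_num
    exact (ENNReal.ofReal_le_ofReal_iff (by norm_num)).mp h4
  obtain ⟨tF, htF⟩ := isCompact_univ.elim_finite_subcover (fun x : X => Metric.ball x (ε/2))
    (fun _ => Metric.isOpen_ball) (fun x _ => Set.mem_iUnion.mpr ⟨x, Metric.mem_ball_self hρ⟩)
  have htFne : tF.Nonempty := by
    rcases hX with ⟨x0⟩
    have hx0 := htF (Set.mem_univ x0)
    rw [Set.mem_iUnion₂] at hx0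
    obtain ⟨w, hw, _⟩ := hx0
    exact ⟨w, hw⟩
  set P : ℕ := tF.card with hPdef
  have hP1 : 1 ≤ (P:ℝ) := by exact_mod_cast Finset.card_pos.mpr htFne
  have hC1 : (1:ℝ) < 2 * P := by linarith
  have hlogC : 0 < Real.log (2 * (P:ℝ)) := Real.log_pos hC1
  suffices H : ∀ γ : ℝ, 0 < γ →
      Filter.limsup (fun n : ℕ =>
        (((n : ℝ)⁻¹ * Real.log (spanCount (⇑f) ν n ε δ) : ℝ) : EReal)) Filter.atTop
        ≤ ((h + γ : ℝ) : EReal) by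
    by_contra hcon
    push_neg at hcon
    obtain ⟨r0, hr1, hr2⟩ := EReal.exists_between_coe_real hcon
    have hγpos : 0 < r0 - h := by
      have := EReal.coe_lt_coe_iff.mp hr1
      linarith
    have h6 := H (r0 - h) hγpos
    rw [show h + (r0 - h) = r0 by ring] at h6
    exact absurd (hr2.trans_le h6) (lt_irrefl _)
  intro γ hγ
  set K : ℕ := max 1 ⌈2 / (1 - δ)⌉₊ with hKdef
  have hK : 2 / (1 - δ) ≤ (K : ℝ) := by
    refine le_trans (Nat.le_ceil _) ?_
    exact_mod_cast le_max_right 1 ⌈2 / (1 - δ)⌉₊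
  have hK1 : 1 ≤ K := le_max_left _ _
  have hKR : (1:ℝ) ≤ K := by exact_mod_cast hK1
  set β : ℝ := γ / (2 * K * Real.log (2 * (P:ℝ))) with hβdef
  have hβ : 0 < β := by
    apply div_pos hγ
    have hKpos : (0:ℝ) < K := by linarith
    nlinarith
  set SI : ℕ → Set X := fun I => ⋃ i ∈ Finset.range I, bowenBall (⇑f) (m i) (ε/2) (c i)
    with hSIdef
  have hSImono : Monotone SI := fun a b hab =>
    Set.biUnion_subset_biUnion_left (fun i hi => Finset.mem_range.mpr
      (lt_of_lt_of_le (Finset.mem_range.mp hi) hab))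
  have hSIunion : (⋃ I, SI I) = ⋃ i, bowenBall (⇑f) (m i) (ε/2) (c i) := by
    ext y
    simp only [hSIdef, Set.mem_iUnion, Finset.mem_range]
    constructor
    · rintro ⟨I, i, hi, hy⟩; exact ⟨i, hy⟩
    · rintro ⟨i, hy⟩; exact ⟨i+1, i, Nat.lt_succ_self i, hy⟩
  have hSImeas : ∀ I, MeasurableSet (SI I) := fun I =>
    (isOpen_biUnion fun i _ => BowenAux.isOpen_bowenBall hf).measurableSet
  have hνU : ν (⋃ i, bowenBall (⇑f) (m i) (ε/2) (c i)) = 1 := by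
    apply le_antisymm prob_le_one
    rw [← hfull]
    exact measure_mono hcov
  have htendS : Filter.Tendsto (fun I => ν (SI I)) Filter.atTop (nhds 1) := by
    have h5 := MeasureTheory.tendsto_measure_iUnion_atTop (μ := ν) hSImono
    rw [hSIunion, hνU] at h5
    exact h5
  have hlt1 : 1 - ENNReal.ofReal β < 1 :=
    ENNReal.sub_lt_self ENNReal.one_ne_top one_ne_zero (ENNReal.ofReal_pos.mpr hβ).ne'
  obtain ⟨I, hI⟩ := ((tendsto_order.mp htendS).1 _ hlt1).exists
  set D : Set X := (SI I)ᶜ with hDdef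
  have hDm : MeasurableSet D := (hSImeas I).compl
  have hνD : ν D ≤ ENNReal.ofReal β := by
    rw [hDdef, measure_compl (hSImeas I) (measure_ne_top ν _), measure_univ,
      tsub_le_iff_right, add_comm]
    exact tsub_le_iff_right.mp hI.le
  set len : Fin I ⊕ {w // w ∈ tF} → ℕ := Sum.elim (fun i : Fin I => m (i:ℕ)) (fun _ => 1)
    with hlendef
  set center : Fin I ⊕ {w // w ∈ tF} → X :=
    Sum.elim (fun i : Fin I => c (i:ℕ)) (fun w => (w:X)) with hcenterdef
  have hlen1 : ∀ a, 1 ≤ len a := by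
    rintro (i|w)
    · exact hm1 _
    · exact le_refl 1
  have hball : ∀ z : X, ∃ w : {w // w ∈ tF}, z ∈ Metric.ball (w : X) (ε/2) := by
    intro z
    have hz := htF (Set.mem_univ z)
    rw [Set.mem_iUnion₂] at hz
    obtain ⟨w, hw, hzw⟩ := hz
    exact ⟨⟨w, hw⟩, hzw⟩
  set sel : X → Fin I ⊕ {w // w ∈ tF} := fun z =>
    if hz : ∃ i : Fin I, z ∈ bowenBall (⇑f) (m (i:ℕ)) (ε/2) (c (i:ℕ))
    then Sum.inl hz.choose else Sum.inr (hball z).choose with hseldef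
  have hsel : ∀ z, z ∈ bowenBall (⇑f) (len (sel z)) (ε/2) (center (sel z)) := by
    intro z
    rw [hseldef]
    simp only
    split_ifs with hz
    · simpa [hlendef, hcenterdef] using hz.choose_spec
    · have hw := (hball z).choose_spec
      simp only [hlendef, hcenterdef, Sum.elim_inr]
      intro i hi
      have hi0 : i = 0 := by omega
      subst hi0
      simpa [dist_comm] using hw
  have hselD : ∀ z, Sum.isRight (sel z) = true → z ∈ D := by
    intro z hz
    rw [hseldef] at hz
    simp only at hz
    split_ifs at hz with hzz
    · simp at hz
    · rw [hDdef, Set.mem_compl_iff, hSIdef]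
      intro hzS
      apply hzz
      simp only [Set.mem_iUnion, Finset.mem_range] at hzS
      obtain ⟨i, hiI, hzi⟩ := hzS
      exact ⟨⟨i, hiI⟩, hzi⟩
  set L' : ℕ := Finset.univ.sup len with hL'def
  have hL' : ∀ a, len a ≤ L' := fun a => Finset.le_sup (Finset.mem_univ a)
  set u : Fin I ⊕ {w // w ∈ tF} → ℝ :=
    Sum.elim (fun i : Fin I => Real.exp (-h * (m (i:ℕ) : ℝ))) (fun _ => (2 * (P:ℝ))⁻¹)
    with hudef
  have hu : ∀ a, 0 < u a := by
    rintro (i|w)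
    · exact Real.exp_pos _
    · simp only [hudef, Sum.elim_inr]
      positivity
  have hu1 : (∑ a, u a) ≤ 1 := by
    rw [hudef, Fintype.sum_sum_type]
    simp only [Sum.elim_inl, Sum.elim_inr]
    have hl : (∑ i : Fin I, Real.exp (-h * (m (i:ℕ) : ℝ))) ≤ 1/2 := by
      rw [Fin.sum_univ_eq_sum_range (fun i => Real.exp (-h * (m i : ℝ))) I]
      exact hpart (Finset.range I)
    have hr : (∑ _w : {w // w ∈ tF}, (2 * (P:ℝ))⁻¹) = 1/2 := by
      rw [Finset.sum_const, Finset.card_univ, Fintype.card_coe, nsmul_eq_mul]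
      have hPne : (P:ℝ) ≠ 0 := by linarith
      field_simp
      ring
    rw [hr]
    linarith
  have huD : ∀ a, Sum.isRight a = true → (2*(P:ℝ))⁻¹ ≤ u a := by
    rintro (i|w) ha
    · simp at ha
    · simp [hudef]
  have huL : ∀ a, Sum.isRight a ≠ true → Real.exp (-h * (len a : ℝ)) ≤ u a := by
    rintro (i|w) ha
    · simp [hudef, hlendef]
    · simp at ha
  have hwD0 : 0 < (2*(P:ℝ))⁻¹ := by positivity
  have hwD1 : (2*(P:ℝ))⁻¹ ≤ 1 := by
    rw [inv_le_one_iff₀]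
    right
    linarith
  set c0 : ℝ := Real.log (2*(P:ℝ)) + h * (L':ℝ) with hc0def
  have hKβ : (K:ℝ) * β * Real.log (2*(P:ℝ)) = γ/2 := by
    rw [hβdef]
    have hKne : (K:ℝ) ≠ 0 := by linarith
    field_simp
  have key : ∀ n : ℕ, 1 ≤ n →
      (n:ℝ)⁻¹ * Real.log (spanCount (⇑f) ν n ε δ)
        ≤ h + γ/2 + (Real.log ((n:ℝ)+1) / n + c0 / n) := by
    intro n hn
    set d : ℕ := ⌈(K:ℝ) * β * n⌉₊ with hddef
    have hd1 : (K:ℝ) * β * n ≤ d := Nat.le_ceil _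
    have hd2 : (d:ℝ) ≤ (K:ℝ)*β*n + 1 := by
      have := Nat.ceil_lt_add_one (show (0:ℝ) ≤ (K:ℝ)*β*n by positivity)
      linarith
    obtain ⟨M, Y, hM, hcover⟩ := BowenAux.code_cover (⇑f) len sel center hlen1 hsel
      Sum.isRight D hselD hh.le u hu hu1 hwD0 hwD1 huD huL n d L' hn hL'
    have hgood := BowenAux.good_measure (⇑f) hf ν herg.toMeasurePreserving D hDm hβ hνD
      hδ0 hδ1 hK hn hd1
    have hspan : spanCount (⇑f) ν n ε δ ≤ M := by
      apply Nat.sInf_le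
      refine ⟨Y, ?_⟩
      refine le_trans hgood (measure_mono ?_)
      intro x hx
      obtain ⟨i, hi⟩ := hcover x hx
      rw [show (2 : ℝ) * (ε/2) = ε by ring] at hi
      exact Set.mem_iUnion.mpr ⟨i, hi⟩
    have hMB : (M:ℝ) ≤ ((n:ℝ)+1) * ((2*(P:ℝ))^d * Real.exp (h * ((n:ℝ)+(L':ℝ)))) := by
      rw [inv_inv] at hM
      exact hM
    have hRHS : Real.log (((n:ℝ)+1) * ((2*(P:ℝ))^d * Real.exp (h * ((n:ℝ)+(L':ℝ)))))
        = Real.log ((n:ℝ)+1) + ((d:ℝ) * Real.log (2*(P:ℝ)) + h * ((n:ℝ)+(L':ℝ))) := by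
      rw [Real.log_mul (by positivity) (by positivity),
        Real.log_mul (by positivity) (Real.exp_ne_zero _), Real.log_pow, Real.log_exp]
    have hlog : Real.log (spanCount (⇑f) ν n ε δ)
        ≤ Real.log ((n:ℝ)+1) + ((d:ℝ) * Real.log (2*(P:ℝ)) + h * ((n:ℝ) + (L':ℝ))) := by
      rcases Nat.eq_zero_or_pos (spanCount (⇑f) ν n ε δ) with h0 | hpos
      · rw [h0]
        simp only [Nat.cast_zero, Real.log_zero]
        rw [← hRHS]
        apply Real.log_nonneg
        have e2 : (1:ℝ) ≤ (2*(P:ℝ))^d := one_le_pow₀ (by linarith)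
        have e3 : (1:ℝ) ≤ Real.exp (h * ((n:ℝ)+(L':ℝ))) := Real.one_le_exp (by positivity)
        have e1 : (1:ℝ) ≤ (n:ℝ)+1 := by
          have : (0:ℝ) ≤ n := Nat.cast_nonneg n
          linarith
        have e4 : (1:ℝ) * 1 ≤ (2*(P:ℝ))^d * Real.exp (h * ((n:ℝ)+(L':ℝ))) :=
          mul_le_mul e2 e3 zero_le_one (by positivity)
        nlinarith [e1, e4]
      · calc Real.log (spanCount (⇑f) ν n ε δ)
            ≤ Real.log (((n:ℝ)+1) * ((2*(P:ℝ))^d * Real.exp (h * ((n:ℝ)+(L':ℝ))))) := by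
              apply Real.log_le_log (by exact_mod_cast hpos)
              exact le_trans (by exact_mod_cast hspan) hMB
          _ = _ := hRHS
    have hn0 : (0:ℝ) < n := by exact_mod_cast hn
    have keylin : (d:ℝ) * Real.log (2*(P:ℝ)) ≤ (γ/2) * n + Real.log (2*(P:ℝ)) := by
      nlinarith [hd2, hlogC.le, hKβ]
    calc (n:ℝ)⁻¹ * Real.log (spanCount (⇑f) ν n ε δ)
        ≤ (n:ℝ)⁻¹ * (Real.log ((n:ℝ)+1)
            + ((d:ℝ) * Real.log (2*(P:ℝ)) + h * ((n:ℝ) + (L':ℝ)))) :=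
          mul_le_mul_of_nonneg_left hlog (by positivity)
      _ = h + (Real.log ((n:ℝ)+1) + ((d:ℝ) * Real.log (2*(P:ℝ)) + h * (L':ℝ))) / n := by
          field_simp
          ring
      _ ≤ h + (Real.log ((n:ℝ)+1) + ((γ/2)*n + Real.log (2*(P:ℝ)) + h * (L':ℝ))) / n :=
          add_le_add_right ((div_le_div_iff_of_pos_right hn0).mpr (by linarith)) h
      _ = h + γ/2 + (Real.log ((n:ℝ)+1) / n + c0 / n) := by
          rw [hc0def]
          field_simp
          ring
  have ht2 : Filter.Tendsto (fun n : ℕ => c0 / (n:ℝ)) Filter.atTop (nhds 0) :=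
    tendsto_const_div_atTop_nhds_zero_nat c0
  have ht1 : Filter.Tendsto (fun n : ℕ => Real.log ((n:ℝ)+1) / n) Filter.atTop (nhds 0) := by
    have hx0 : Filter.Tendsto (fun x : ℝ => Real.log x / x) Filter.atTop (nhds 0) :=
      Real.isLittleO_log_id_atTop.tendsto_div_nhds_zero
    have hx1 : Filter.Tendsto (fun n : ℕ => (n:ℝ)+1) Filter.atTop Filter.atTop :=
      Filter.tendsto_atTop_add_const_right _ 1 tendsto_natCast_atTop_atTop
    have hx2 : Filter.Tendsto (fun n : ℕ => Real.log ((n:ℝ)+1) / ((n:ℝ)+1))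
        Filter.atTop (nhds 0) := hx0.comp hx1
    have hx3 : Filter.Tendsto (fun n : ℕ => 2 * (Real.log ((n:ℝ)+1) / ((n:ℝ)+1)))
        Filter.atTop (nhds 0) := by
      have := hx2.const_mul (2:ℝ)
      simpa using this
    apply tendsto_of_tendsto_of_tendsto_of_le_of_le' tendsto_const_nhds hx3
    · filter_upwards [Filter.eventually_ge_atTop 1] with n hn
      have hn0 : (0:ℝ) < n := by exact_mod_cast hn
      have hlnn : 0 ≤ Real.log ((n:ℝ)+1) := Real.log_nonneg (by linarith)
      exact div_nonneg hlnn hn0.le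
    · filter_upwards [Filter.eventually_ge_atTop 1] with n hn
      have hn0 : (0:ℝ) < n := by exact_mod_cast hn
      have hlnn : 0 ≤ Real.log ((n:ℝ)+1) := Real.log_nonneg (by linarith)
      rw [show 2*(Real.log ((n:ℝ)+1)/((n:ℝ)+1)) = (2*Real.log ((n:ℝ)+1))/((n:ℝ)+1) by ring,
        div_le_div_iff₀ hn0 (by linarith)]
      have hn1 : (1:ℝ) ≤ (n:ℝ) := by exact_mod_cast hn
      nlinarith [mul_nonneg hlnn (by linarith : (0:ℝ) ≤ (n:ℝ) - 1)]
  have htr : Filter.Tendsto (fun n : ℕ => h + γ/2 + (Real.log ((n:ℝ)+1)/n + c0/n))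
      Filter.atTop (nhds (h + γ/2)) := by
    have h8 := (tendsto_const_nhds (x := h + γ/2) (f := Filter.atTop (α := ℕ))).add (ht1.add ht2)
    simpa using h8
  have hev : ∀ᶠ n : ℕ in Filter.atTop,
      (((n : ℝ)⁻¹ * Real.log (spanCount (⇑f) ν n ε δ) : ℝ) : EReal)
        ≤ (((h + γ/2 + (Real.log ((n:ℝ)+1)/n + c0/n)) : ℝ) : EReal) := by
    filter_upwards [Filter.eventually_ge_atTop 1] with n hn
    exact EReal.coe_le_coe_iff.mpr (key n hn)
  calc Filter.limsup (fun n : ℕ =>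
        (((n : ℝ)⁻¹ * Real.log (spanCount (⇑f) ν n ε δ) : ℝ) : EReal)) Filter.atTop
      ≤ Filter.limsup (fun n : ℕ =>
        (((h + γ/2 + (Real.log ((n:ℝ)+1)/n + c0/n)) : ℝ) : EReal)) Filter.atTop :=
        Filter.limsup_le_limsup hev
    _ = ((h + γ/2 : ℝ) : EReal) := (EReal.tendsto_coe.mpr htr).limsup_eq
    _ ≤ ((h + γ : ℝ) : EReal) := by
        rw [EReal.coe_le_coe_iff]
        linarith
end
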